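/- Let x ≥ 59 and l ≥ 2 be real numbers. Let G be a finite simple graph with a weight function w: V(G) → ℝ≥0 with w(V(G)) ≠ 0, ordered nonincreasingly by w, and suppose that for each vertex v a fractional cover u_v of N^L(v) with total weight t(v) ≤ l is given as in the context. Let R̄ ⊆ V(G) be a set none of whose subsets is (x,l)-reducible. If S ⊆ R̄ contains no dense subset of R̄, then w(S) ≤ w(R̄)/(x+1) + w(V(G))/(x(x+1)). -/

import Mathlib

open scoped Classical

/-- The fractional chromatic number of a finite simple graph `G`. -/
noncomputable def fracChrom {V : Type} [Fintype V] (G : SimpleGraph V) : ℝ :=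
  sInf { c : ℝ |
    ∃ y : Finset V → ℝ,
      (∀ I, 0 ≤ y I) ∧
      (∀ I : Finset V, y I ≠ 0 → ∀ u ∈ I, ∀ v ∈ I, ¬ G.Adj u v) ∧
      (∀ v : V, 1 ≤ ∑ I ∈ Finset.univ.filter (fun I : Finset V => v ∈ I), y I) ∧
      c = ∑ I : Finset V, y I }

/-- The set of the first `k` elements of the finite subset `Y` of a linearly ordered type. -/
def firstOf {V : Type} [LinearOrder V] (Y : Finset V) (k : ℕ) : Finset V :=
  Y.filter fun y => (Y.filter fun z => z < y).card < k

/-- A nonempty subset `X` of `Y` is `s`-principal in `Y` if `X ⊆ Y_{s|X|}`. -/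
def IsPrincipalIn {V : Type} [LinearOrder V] (Y : Finset V) (s : ℝ) (X : Finset V) : Prop :=
  X.Nonempty ∧ X ⊆ firstOf Y ⌊s * X.card⌋₊

/-- The set of type-2 vertices of `A`: those `v ∈ A` for which the total `u v`-weight of
the independent sets disjoint from `A` exceeds `t(v)/(6(x+1))`. -/
noncomputable def typeTwo {V : Type} [Fintype V] (x : ℝ) (u : V → Finset V → ℝ)
    (A : Finset V) : Finset V :=
  A.filter fun v =>
    ¬ (∑ I ∈ Finset.univ.filter (fun I : Finset V => Disjoint I A), u v I) ≤
      (∑ I : Finset V, u v I) / (6 * (x + 1))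

/-- A nonempty set `A ⊆ R̄` is dense if `A` is `(x+1)`-principal in `R̄` and
`|T₂(A)| ≤ |A|/(x+1)`. -/
noncomputable def IsDenseIn {V : Type} [Fintype V] [LinearOrder V] (x : ℝ)
    (u : V → Finset V → ℝ) (Rbar : Finset V) (A : Finset V) : Prop :=
  A ⊆ Rbar ∧ IsPrincipalIn Rbar (x + 1) A ∧
    ((typeTwo x u A).card : ℝ) ≤ (A.card : ℝ) / (x + 1)

/-- A set `A` is `(x,l)`-reducible if `w(A) ≥ w(V)/(x(x+1)²)` and
`χ_f(L_A(v)) ≤ l(1 - 1/(6(x+1)))` for every `v ∈ A`. -/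
noncomputable def IsReducible {V : Type} [Fintype V] [LinearOrder V] (x l : ℝ)
    (G : SimpleGraph V) (w : V → ℝ) (A : Finset V) : Prop :=
  (∑ v, w v) / (x * (x + 1) ^ 2) ≤ ∑ v ∈ A, w v ∧
  ∀ v ∈ A, fracChrom (G.induce {a | a ∈ A ∧ G.Adj a v ∧ a < v}) ≤
    l * (1 - 1 / (6 * (x + 1)))

section AuxRank

variable {V : Type} [LinearOrder V]

/-- rank of `v` within `Rbar`: the number of elements of `Rbar` preceding `v`. -/
def rnk (Rbar : Finset V) (v : V) : ℕ := (Rbar.filter fun z => z < v).card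

lemma mem_firstOf (Rbar : Finset V) (k : ℕ) (v : V) :
    v ∈ firstOf Rbar k ↔ v ∈ Rbar ∧ rnk Rbar v < k := by
  simp [firstOf, rnk, Finset.mem_filter]

lemma rnk_lt_card {Rbar : Finset V} {v : V} (hv : v ∈ Rbar) : rnk Rbar v < Rbar.card := by
  refine Finset.card_lt_card ⟨Finset.filter_subset _ _, fun hsub => ?_⟩
  have := hsub hv
  rw [Finset.mem_filter] at this
  exact lt_irrefl v this.2

lemma rnk_strict {Rbar : Finset V} {a b : V} (ha : a ∈ Rbar) (h : a < b) :
    rnk Rbar a < rnk Rbar b := by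
  have hsub0 : (Rbar.filter fun z => z < a) ⊆ (Rbar.filter fun z => z < b) := by
    intro z hz
    rw [Finset.mem_filter] at hz ⊢
    exact ⟨hz.1, lt_trans hz.2 h⟩
  refine Finset.card_lt_card ⟨hsub0, ?_⟩
  intro hsub
  have h1 : a ∈ Rbar.filter fun z => z < b := Finset.mem_filter.mpr ⟨ha, h⟩
  have := hsub h1
  rw [Finset.mem_filter] at this
  exact lt_irrefl a this.2

lemma rnk_rev {Rbar : Finset V} {a b : V} (hb : b ∈ Rbar) (h : rnk Rbar a < rnk Rbar b) :
    a < b := by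
  rcases lt_trichotomy a b with h1 | rfl | h1
  · exact h1
  · exact absurd h (lt_irrefl _)
  · exact absurd (rnk_strict hb h1) (by omega)

lemma rnk_inj {Rbar : Finset V} {a b : V} (ha : a ∈ Rbar) (hb : b ∈ Rbar)
    (h : rnk Rbar a = rnk Rbar b) : a = b := by
  rcases lt_trichotomy a b with h1 | h1 | h1
  · exact absurd (rnk_strict ha h1) (by omega)
  · exact h1
  · exact absurd (rnk_strict hb h1) (by omega)

lemma rnk_image (Rbar : Finset V) : Rbar.image (rnk Rbar) = Finset.range Rbar.card := by
  apply Finset.eq_of_subset_of_card_le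
  · intro m hm
    obtain ⟨v, hv, rfl⟩ := Finset.mem_image.mp hm
    exact Finset.mem_range.mpr (rnk_lt_card hv)
  · rw [Finset.card_range, Finset.card_image_of_injOn (fun a ha b hb h => rnk_inj ha hb h)]

lemma rnk_fiber_card_le_one (Rbar : Finset V) (m : ℕ) :
    (Rbar.filter fun v => rnk Rbar v = m).card ≤ 1 := by
  rw [Finset.card_le_one]
  intro a ha b hb
  rw [Finset.mem_filter] at ha hb
  exact rnk_inj ha.1 hb.1 (ha.2.trans hb.2.symm)

lemma sum_fiber_eq {Rbar T : Finset V} (hT : T ⊆ Rbar) (w : V → ℝ) (m : ℕ) :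
    ∑ v ∈ T.filter (fun v => rnk Rbar v = m), w v =
      ((T.filter (fun v => rnk Rbar v = m)).card : ℝ) *
        ∑ v ∈ Rbar.filter (fun v => rnk Rbar v = m), w v := by
  have hsub : T.filter (fun v => rnk Rbar v = m) ⊆ Rbar.filter (fun v => rnk Rbar v = m) := by
    intro a ha
    rw [Finset.mem_filter] at ha ⊢
    exact ⟨hT ha.1, ha.2⟩
  rcases Finset.eq_empty_or_nonempty (T.filter (fun v => rnk Rbar v = m)) with h | h
  · rw [h]; simp
  · have heq : T.filter (fun v => rnk Rbar v = m) = Rbar.filter (fun v => rnk Rbar v = m) :=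
      Finset.eq_of_subset_of_card_le hsub (le_trans (rnk_fiber_card_le_one Rbar m) h.card_pos)
    have hcard : (T.filter (fun v => rnk Rbar v = m)).card = 1 := by
      rw [heq]
      exact le_antisymm (rnk_fiber_card_le_one Rbar m) (heq ▸ h).card_pos
    rw [hcard, heq]
    simp

lemma sum_eq_fiber_sum {Rbar T : Finset V} (hT : T ⊆ Rbar) (w : V → ℝ) :
    ∑ v ∈ T, w v =
      ∑ m ∈ Finset.range Rbar.card, ((T.filter (fun v => rnk Rbar v = m)).card : ℝ) *
        (∑ v ∈ Rbar.filter (fun v => rnk Rbar v = m), w v) := by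
  rw [← Finset.sum_fiberwise_of_maps_to (g := rnk Rbar) (t := Finset.range Rbar.card)
    (fun v hv => Finset.mem_range.mpr (rnk_lt_card (hT hv))) w]
  exact Finset.sum_congr rfl fun m _ => sum_fiber_eq hT w m

lemma card_inter_firstOf {Rbar T : Finset V} (hT : T ⊆ Rbar) (k : ℕ) :
    ((T ∩ firstOf Rbar k).card : ℝ) =
      ∑ m ∈ Finset.range k, ((T.filter (fun v => rnk Rbar v = m)).card : ℝ) := by
  have h1 : T ∩ firstOf Rbar k = T.filter (fun v => rnk Rbar v < k) := by
    ext v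
    rw [Finset.mem_inter, mem_firstOf, Finset.mem_filter]
    constructor
    · rintro ⟨h2, _, h4⟩; exact ⟨h2, h4⟩
    · rintro ⟨h2, h3⟩; exact ⟨h2, hT h2, h3⟩
  rw [h1]
  have h2 := Finset.sum_fiberwise_of_maps_to (g := rnk Rbar) (t := Finset.range k)
    (s := T.filter (fun v => rnk Rbar v < k))
    (fun v hv => Finset.mem_range.mpr (Finset.mem_filter.mp hv).2) (fun _ => (1 : ℝ))
  have h3 : ∀ m ∈ Finset.range k,
      (T.filter (fun v => rnk Rbar v < k)).filter (fun v => rnk Rbar v = m)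
        = T.filter (fun v => rnk Rbar v = m) := by
    intro m hm
    rw [Finset.filter_filter]
    apply Finset.filter_congr
    intro v _
    constructor
    · rintro ⟨_, h5⟩; exact h5
    · rintro h5; exact ⟨h5 ▸ Finset.mem_range.mp hm, h5⟩
  calc ((T.filter (fun v => rnk Rbar v < k)).card : ℝ)
      = ∑ _v ∈ T.filter (fun v => rnk Rbar v < k), (1 : ℝ) := by simp
    _ = ∑ m ∈ Finset.range k, ∑ _v ∈ (T.filter (fun v => rnk Rbar v < k)).filter
          (fun v => rnk Rbar v = m), (1 : ℝ) := h2.symm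
    _ = ∑ m ∈ Finset.range k, ((T.filter (fun v => rnk Rbar v = m)).card : ℝ) := by
        refine Finset.sum_congr rfl fun m hm => ?_
        rw [h3 m hm]; simp

lemma fiberSum_succ_le {Rbar : Finset V} (w : V → ℝ) (hw0 : ∀ v, 0 ≤ w v)
    (hmono : ∀ a b : V, a < b → w b ≤ w a) (m : ℕ) :
    ∑ v ∈ Rbar.filter (fun v => rnk Rbar v = m + 1), w v ≤
      ∑ v ∈ Rbar.filter (fun v => rnk Rbar v = m), w v := by
  rcases Finset.eq_empty_or_nonempty (Rbar.filter (fun v => rnk Rbar v = m + 1)) with he | hne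
  · rw [he, Finset.sum_empty]
    exact Finset.sum_nonneg fun v _ => hw0 v
  · obtain ⟨v2, hv2⟩ := hne
    obtain ⟨hv2R, hv2rk⟩ := Finset.mem_filter.mp hv2
    have hm1 : m + 1 < Rbar.card := hv2rk ▸ rnk_lt_card hv2R
    have hmem : m ∈ Finset.range Rbar.card := Finset.mem_range.mpr (by omega)
    obtain ⟨v1, hv1R, hv1rk⟩ : ∃ v1 ∈ Rbar, rnk Rbar v1 = m := by
      have : m ∈ Rbar.image (rnk Rbar) := (rnk_image Rbar) ▸ hmem
      exact Finset.mem_image.mp this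
    have hfib : ∀ (j : ℕ) (v : V), v ∈ Rbar → rnk Rbar v = j →
        Rbar.filter (fun z => rnk Rbar z = j) = {v} := by
      intro j v hv hj
      ext z
      rw [Finset.mem_filter, Finset.mem_singleton]
      constructor
      · rintro ⟨hzR, hzj⟩; exact rnk_inj hzR hv (hzj.trans hj.symm)
      · rintro rfl; exact ⟨hv, hj⟩
    rw [hfib (m + 1) v2 hv2R hv2rk, hfib m v1 hv1R hv1rk, Finset.sum_singleton,
      Finset.sum_singleton]
    exact hmono v1 v2 (rnk_rev hv2R (by omega))

end AuxRank

lemma abel_nonneg : ∀ (n : ℕ) (q c : ℕ → ℝ), (∀ m, 0 ≤ q m) → (∀ m, q (m + 1) ≤ q m) →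
    (∀ k, k ≤ n → 0 ≤ ∑ m ∈ Finset.range k, c m) →
    0 ≤ ∑ m ∈ Finset.range n, c m * q m := by
  intro n
  induction n with
  | zero => intro q c _ _ _; simp
  | succ n ih =>
    intro q c hq0 hqd hp
    have hA : Antitone q := antitone_nat_of_succ_le hqd
    have key : ∀ m ∈ Finset.range (n + 1),
        c m * q m = c m * (q (min m n) - q n) + c m * q n := by
      intro m hm
      have h1 : min m n = m := min_eq_left (Nat.lt_succ_iff.mp (Finset.mem_range.mp hm))
      rw [h1]; ring
    rw [Finset.sum_congr rfl key, Finset.sum_add_distrib, ← Finset.sum_mul]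
    have h1 : 0 ≤ ∑ m ∈ Finset.range (n + 1), c m * (q (min m n) - q n) := by
      rw [Finset.sum_range_succ]
      simp only [min_self, sub_self, mul_zero, add_zero]
      exact ih (fun m => q (min m n) - q n) c
        (fun m => sub_nonneg.mpr (hA (min_le_right m n)))
        (fun m => sub_le_sub_right (hA (min_le_min (Nat.le_succ m) (le_refl n))) _)
        (fun k hk => hp k (le_trans hk (Nat.le_succ n)))
    exact add_nonneg h1 (mul_nonneg (hp (n + 1) le_rfl) (hq0 n))

lemma fracChrom_le {V : Type} [Fintype V] (G : SimpleGraph V) (y : Finset V → ℝ)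
    (h0 : ∀ I, 0 ≤ y I)
    (hind : ∀ I : Finset V, y I ≠ 0 → ∀ a ∈ I, ∀ b ∈ I, ¬ G.Adj a b)
    (hcov : ∀ v : V, 1 ≤ ∑ I ∈ Finset.univ.filter (fun I : Finset V => v ∈ I), y I) :
    fracChrom G ≤ ∑ I : Finset V, y I := by
  apply csInf_le
  · refine ⟨0, ?_⟩
    rintro c ⟨y', h1, _, _, rfl⟩
    exact Finset.sum_nonneg fun I _ => h1 I
  · exact ⟨y, h0, hind, hcov, rfl⟩

lemma typeTwo_mono {V : Type} [Fintype V] (x : ℝ) (u : V → Finset V → ℝ) (v : V)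
    (hu0 : ∀ I : Finset V, 0 ≤ u v I) (A B : Finset V) (hvB : v ∈ B)
    (hAB : ∀ I : Finset V, u v I ≠ 0 → Disjoint I A → Disjoint I B)
    (hv : v ∈ typeTwo x u A) : v ∈ typeTwo x u B := by
  simp only [typeTwo, Finset.mem_filter] at hv ⊢
  refine ⟨hvB, fun hc => hv.2 (le_trans ?_ hc)⟩
  rw [Finset.sum_filter, Finset.sum_filter]
  refine Finset.sum_le_sum fun I _ => ?_
  by_cases hu : u v I = 0
  · simp [hu]
  · by_cases hd : Disjoint I A
    · rw [if_pos hd, if_pos (hAB I hu hd)]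
    · rw [if_neg hd]
      by_cases hb : Disjoint I B
      · rw [if_pos hb]; exact hu0 I
      · rw [if_neg hb]

lemma chi_bound {V : Type} [Fintype V] [LinearOrder V] (G : SimpleGraph V)
    (u : V → Finset V → ℝ) (v : V) (x l : ℝ) (hx : 59 ≤ x)
    (hu0 : ∀ I : Finset V, 0 ≤ u v I)
    (husupp : ∀ I : Finset V, u v I ≠ 0 →
      (∀ a ∈ I, G.Adj a v ∧ a < v) ∧ (∀ a ∈ I, ∀ b ∈ I, ¬ G.Adj a b))
    (hucover : ∀ a, G.Adj a v → a < v →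
      1 ≤ ∑ I ∈ Finset.univ.filter (fun I : Finset V => a ∈ I), u v I)
    (htl : (∑ I : Finset V, u v I) ≤ l)
    (D A : Finset V)
    (hDA : ∀ a ∈ D, a < v → a ∈ A)
    (s : Set V) [Fintype ↥s] (hsmem : ∀ a, a ∈ s ↔ (a ∈ D ∧ G.Adj a v ∧ a < v))
    (hmass : (∑ I : Finset V, u v I) / (6 * (x + 1)) <
      ∑ I ∈ Finset.univ.filter (fun I : Finset V => Disjoint I A), u v I) :
    fracChrom (G.induce s) ≤ l * (1 - 1 / (6 * (x + 1))) := by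
  have h6 : (0:ℝ) < 6 * (x + 1) := by linarith
  set F : Finset V → Finset ↥s := fun I => I.subtype (fun a => a ∈ s) with hF
  set yy : Finset ↥s → ℝ := (fun J => if J = ∅ then 0 else
      ∑ I ∈ Finset.univ.filter (fun I : Finset V => F I = J), u v I) with hyy
  have h0 : ∀ J, 0 ≤ yy J := by
    intro J
    simp only [hyy]
    split
    · exact le_rfl
    · exact Finset.sum_nonneg fun I _ => hu0 I
  have hind : ∀ J : Finset ↥s, yy J ≠ 0 → ∀ a ∈ J, ∀ b ∈ J, ¬ (G.induce s).Adj a b := by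
    intro J hJ a haJ b hbJ
    simp only [hyy] at hJ
    by_cases hJe : J = ∅
    · subst hJe; exact absurd haJ (by simp)
    · rw [if_neg hJe] at hJ
      obtain ⟨I, hIf, hIne⟩ := Finset.exists_ne_zero_of_sum_ne_zero hJ
      have hJI : F I = J := (Finset.mem_filter.mp hIf).2
      have haI : (a : V) ∈ I := by
        rw [← hJI] at haJ
        simpa only [hF, Finset.mem_subtype] using haJ
      have hbI : (b : V) ∈ I := by
        rw [← hJI] at hbJ
        simpa only [hF, Finset.mem_subtype] using hbJ
      have hnadj := (husupp I hIne).2 (a : V) haI (b : V) hbI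
      intro hadj
      exact hnadj hadj
  have hcov : ∀ a : ↥s, 1 ≤ ∑ J ∈ Finset.univ.filter (fun J : Finset ↥s => a ∈ J), yy J := by
    intro a
    obtain ⟨haD, hadj, halt⟩ := (hsmem (a : V)).mp a.2
    have h1 : ∑ J ∈ Finset.univ.filter (fun J : Finset ↥s => a ∈ J), yy J =
        ∑ J ∈ Finset.univ.filter (fun J : Finset ↥s => a ∈ J),
          ∑ I ∈ Finset.univ.filter (fun I : Finset V => F I = J), u v I := by
      refine Finset.sum_congr rfl fun J hJ => ?_
      simp only [hyy]
      rw [if_neg (Finset.ne_empty_of_mem (Finset.mem_filter.mp hJ).2)]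
    rw [h1, Finset.sum_fiberwise_eq_sum_filter]
    have h2 : Finset.univ.filter
        (fun I : Finset V => F I ∈ Finset.univ.filter (fun J : Finset ↥s => a ∈ J)) =
        Finset.univ.filter (fun I : Finset V => (a : V) ∈ I) := by
      apply Finset.filter_congr
      intro I _
      simp [hF, Finset.mem_subtype]
    rw [h2]
    exact hucover (a : V) hadj halt
  have htot : (∑ J : Finset ↥s, yy J) ≤ l * (1 - 1 / (6 * (x + 1))) := by
    have hsplit := Finset.sum_filter_add_sum_filter_not Finset.univ
      (fun J : Finset ↥s => J = ∅) yy
    have hzero : ∑ J ∈ Finset.univ.filter (fun J : Finset ↥s => J = ∅), yy J = 0 := by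
      refine Finset.sum_eq_zero fun J hJ => ?_
      simp only [hyy]
      rw [if_pos (Finset.mem_filter.mp hJ).2]
    have h1 : ∑ J ∈ Finset.univ.filter (fun J : Finset ↥s => ¬ J = ∅), yy J =
        ∑ J ∈ Finset.univ.filter (fun J : Finset ↥s => ¬ J = ∅),
          ∑ I ∈ Finset.univ.filter (fun I : Finset V => F I = J), u v I := by
      refine Finset.sum_congr rfl fun J hJ => ?_
      simp only [hyy]
      rw [if_neg (Finset.mem_filter.mp hJ).2]
    have h2 : ∑ J ∈ Finset.univ.filter (fun J : Finset ↥s => ¬ J = ∅),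
          ∑ I ∈ Finset.univ.filter (fun I : Finset V => F I = J), u v I
        = ∑ I ∈ Finset.univ.filter (fun I : Finset V => ¬ F I = ∅), u v I := by
      rw [Finset.sum_fiberwise_eq_sum_filter]
      congr 1
      apply Finset.filter_congr
      intro I _
      simp
    have hsplit2 := Finset.sum_filter_add_sum_filter_not Finset.univ
      (fun I : Finset V => F I = ∅) (u v)
    have hz : (∑ I ∈ Finset.univ.filter (fun I : Finset V => Disjoint I A), u v I) ≤
        ∑ I ∈ Finset.univ.filter (fun I : Finset V => F I = ∅), u v I := by
      rw [← Finset.sum_filter_ne_zero (Finset.univ.filter (fun I : Finset V => Disjoint I A))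
        (f := u v)]
      apply Finset.sum_le_sum_of_subset_of_nonneg
      · intro I hI
        rw [Finset.mem_filter] at hI
        obtain ⟨hI1, hIne⟩ := hI
        obtain ⟨-, hdis⟩ := Finset.mem_filter.mp hI1
        rw [Finset.mem_filter]
        refine ⟨Finset.mem_univ _, ?_⟩
        rw [Finset.eq_empty_iff_forall_notMem]
        intro a haF
        have haI : (a : V) ∈ I := by simpa only [hF, Finset.mem_subtype] using haF
        obtain ⟨haD, hadj', halt'⟩ := (hsmem (a : V)).mp a.2
        exact (Finset.disjoint_left.mp hdis haI) (hDA _ haD halt')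
      · intro I _ _; exact hu0 I
    have htv0 : 0 ≤ ∑ I : Finset V, u v I := Finset.sum_nonneg fun I _ => hu0 I
    have hfac : 0 ≤ 1 - 1 / (6 * (x + 1)) := by
      rw [sub_nonneg, div_le_one h6]; linarith
    have hmul : (∑ I : Finset V, u v I) * (1 - 1 / (6 * (x + 1))) ≤
        l * (1 - 1 / (6 * (x + 1))) := mul_le_mul_of_nonneg_right htl hfac
    have hsum : (∑ J : Finset ↥s, yy J) =
        (∑ I : Finset V, u v I)
          - ∑ I ∈ Finset.univ.filter (fun I : Finset V => F I = ∅), u v I := by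
      rw [← hsplit, hzero, zero_add, h1, h2]
      linarith [hsplit2]
    rw [hsum]
    have hrw : (∑ I : Finset V, u v I) * (1 - 1 / (6 * (x + 1)))
        = (∑ I : Finset V, u v I) - (∑ I : Finset V, u v I) / (6 * (x + 1)) := by ring
    linarith
  have hle : fracChrom (G.induce s) ≤ ∑ J : Finset ↥s, yy J := by
    apply csInf_le
    · refine ⟨0, ?_⟩
      rintro c ⟨y', h1, -, -, rfl⟩
      exact Finset.sum_nonneg fun I _ => h1 I
    · refine ⟨yy, h0, hind, ?_, rfl⟩
      intro a
      convert hcov a using 2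
      exact Finset.filter_congr_decidable _ _ _
  exact le_trans hle htot

theorem weight_bound_without_dense_subsets
    (x l : ℝ) (hx : 59 ≤ x) (hl : 2 ≤ l)
    (V : Type) [Fintype V] [LinearOrder V] (G : SimpleGraph V)
    (w : V → ℝ) (hw0 : ∀ v, 0 ≤ w v)
    (hmono : ∀ a b : V, a < b → w b ≤ w a)
    (hwV : ∑ v, w v ≠ 0)
    -- for each vertex `v`, `u v` is a fractional cover of `N^L(v)` with total weight ≤ l:
    (u : V → Finset V → ℝ)
    (hu0 : ∀ v I, 0 ≤ u v I) (hu1 : ∀ v I, u v I ≤ 1)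
    (husupp : ∀ v I, u v I ≠ 0 →
      (∀ a ∈ I, G.Adj a v ∧ a < v) ∧ (∀ a ∈ I, ∀ b ∈ I, ¬ G.Adj a b))
    (hucover : ∀ v a, G.Adj a v → a < v →
      1 ≤ ∑ I ∈ Finset.univ.filter (fun I : Finset V => a ∈ I), u v I)
    (ht : ∀ v, (∑ I : Finset V, u v I) ≤ l)
    (Rbar : Finset V)
    (hRbar : ∀ A ⊆ Rbar, ¬ IsReducible x l G w A)
    (S : Finset V) (hS : S ⊆ Rbar)
    (hnodense : ∀ A ⊆ S, ¬ IsDenseIn x u Rbar A) :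
    ∑ v ∈ S, w v ≤ (∑ v ∈ Rbar, w v) / (x + 1) + (∑ v, w v) / (x * (x + 1)) := by
  have hx1 : (0:ℝ) < x + 1 := by linarith
  have hx0 : (0:ℝ) < x := by linarith
  set D : Finset V := S.filter (fun v => v ∈ typeTwo x u (S.filter (fun b => b ≤ v)))
    with hDdef
  have hDS : D ⊆ S := Finset.filter_subset _ _
  have hDR : D ⊆ Rbar := fun a ha => hS (hDS ha)
  -- Step 1: every vertex of D satisfies the fractional-chromatic condition.
  have hchi : ∀ v ∈ D, fracChrom (G.induce {a | a ∈ D ∧ G.Adj a v ∧ a < v}) ≤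
      l * (1 - 1 / (6 * (x + 1))) := by
    intro v hvD
    have hvD' := hvD
    rw [hDdef, Finset.mem_filter] at hvD'
    obtain ⟨hvS, hvT⟩ := hvD'
    simp only [typeTwo, Finset.mem_filter] at hvT
    have hmass := not_le.mp hvT.2
    refine chi_bound G u v x l hx (hu0 v) (husupp v) (hucover v) (ht v) D
      (S.filter (fun b => b ≤ v)) ?_ _ (fun a => Iff.rfl) ?_
    · intro a haD halt
      rw [Finset.mem_filter]
      exact ⟨hDS haD, le_of_lt halt⟩
    · convert hmass using 3
      exact rfl
  -- Step 2: D is not reducible, hence has small weight.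
  have hred := hRbar D hDR
  simp only [IsReducible] at hred
  push_neg at hred
  have hwD : ∑ v ∈ D, w v < (∑ v, w v) / (x * (x + 1) ^ 2) := by
    by_contra hcon
    push_neg at hcon
    obtain ⟨v, hvD, hlt⟩ := hred hcon
    exact absurd (hchi v hvD) (not_le.mpr hlt)
  -- Step 3: for every k, |S ∩ R_k| ≤ k/(x+1) + (x+1)|D ∩ R_k|.
  have hperk : ∀ k : ℕ, 0 ≤ (k : ℝ) / (x + 1)
      + ((x + 1) * ((D ∩ firstOf Rbar k).card : ℝ) - ((S ∩ firstOf Rbar k).card : ℝ)) := by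
    intro k
    by_cases hXle : ((S ∩ firstOf Rbar k).card : ℝ) ≤ (k : ℝ) / (x + 1)
    · have h4 : (0:ℝ) ≤ (x + 1) * ((D ∩ firstOf Rbar k).card : ℝ) := by positivity
      have h5 : (0:ℝ) ≤ (k : ℝ) / (x + 1) := by positivity
      linarith
    · push_neg at hXle
      have hkX : (k : ℝ) < (x + 1) * ((S ∩ firstOf Rbar k).card : ℝ) := by
        rw [div_lt_iff₀ hx1] at hXle
        linarith
      have hXS : S ∩ firstOf Rbar k ⊆ S := Finset.inter_subset_left
      have hXR : S ∩ firstOf Rbar k ⊆ Rbar := fun a ha => hS (hXS ha)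
      have hpos : 0 < (S ∩ firstOf Rbar k).card := by
        by_contra hc
        push_neg at hc
        have h0' : (S ∩ firstOf Rbar k).card = 0 := Nat.le_zero.mp hc
        rw [h0'] at hXle
        have h5 : (0:ℝ) ≤ (k : ℝ) / (x + 1) := by positivity
        simp only [Nat.cast_zero] at hXle
        linarith
      have hprin : IsPrincipalIn Rbar (x + 1) (S ∩ firstOf Rbar k) := by
        refine ⟨Finset.card_pos.mp hpos, ?_⟩
        have hk : k ≤ ⌊(x + 1) * (((S ∩ firstOf Rbar k).card : ℕ) : ℝ)⌋₊ :=
          Nat.le_floor (le_of_lt hkX)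
        intro a ha
        have ha2 := Finset.mem_of_mem_inter_right ha
        rw [mem_firstOf] at ha2 ⊢
        exact ⟨ha2.1, lt_of_lt_of_le ha2.2 hk⟩
      have hT2 : ((S ∩ firstOf Rbar k).card : ℝ) / (x + 1) <
          ((typeTwo x u (S ∩ firstOf Rbar k)).card : ℝ) := by
        by_contra hc
        push_neg at hc
        exact hnodense _ hXS ⟨hXR, hprin, hc⟩
      have hsubD : typeTwo x u (S ∩ firstOf Rbar k) ⊆ D ∩ firstOf Rbar k := by
        intro v hv
        have hv' := hv
        simp only [typeTwo, Finset.mem_filter] at hv'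
        obtain ⟨hvX, hmass2⟩ := hv'
        have hvFk : v ∈ firstOf Rbar k := Finset.mem_of_mem_inter_right hvX
        have hvS' : v ∈ S := Finset.mem_of_mem_inter_left hvX
        refine Finset.mem_inter.mpr ⟨?_, hvFk⟩
        rw [hDdef, Finset.mem_filter]
        refine ⟨hvS', ?_⟩
        refine typeTwo_mono x u v (hu0 v) (S ∩ firstOf Rbar k) (S.filter (fun b => b ≤ v))
          (Finset.mem_filter.mpr ⟨hvS', le_refl v⟩) ?_ hv
        intro I hIne hdis
        rw [Finset.disjoint_left]
        intro b hbI hbB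
        obtain ⟨hbS, hble⟩ := Finset.mem_filter.mp hbB
        obtain ⟨hadj, hblt⟩ := (husupp v I hIne).1 b hbI
        have hbR : b ∈ Rbar := hS hbS
        have hrkv : rnk Rbar v < k := ((mem_firstOf Rbar k v).mp hvFk).2
        have hrkb : rnk Rbar b < rnk Rbar v := rnk_strict hbR hblt
        have hbX : b ∈ S ∩ firstOf Rbar k := by
          refine Finset.mem_inter.mpr ⟨hbS, ?_⟩
          rw [mem_firstOf]
          exact ⟨hbR, lt_trans hrkb hrkv⟩
        exact (Finset.disjoint_left.mp hdis hbI) hbX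
      have hcard : ((typeTwo x u (S ∩ firstOf Rbar k)).card : ℝ) ≤
          ((D ∩ firstOf Rbar k).card : ℝ) := by
        exact_mod_cast Finset.card_le_card hsubD
      have h3 : ((S ∩ firstOf Rbar k).card : ℝ) / (x + 1) <
          ((D ∩ firstOf Rbar k).card : ℝ) := lt_of_lt_of_le hT2 hcard
      rw [div_lt_iff₀ hx1] at h3
      have hk0 : 0 ≤ (k : ℝ) / (x + 1) := by positivity
      linarith
  -- Step 4: Abel summation.
  set n := Rbar.card with hn
  set Q : ℕ → ℝ := fun m => ∑ v ∈ Rbar.filter (fun v => rnk Rbar v = m), w v with hQ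
  set ND : ℕ → ℝ := fun m => ((D.filter (fun v => rnk Rbar v = m)).card : ℝ) with hND
  set NS : ℕ → ℝ := fun m => ((S.filter (fun v => rnk Rbar v = m)).card : ℝ) with hNS
  set cc : ℕ → ℝ := fun m => 1 / (x + 1) + ((x + 1) * ND m - NS m) with hcc
  have hQ0 : ∀ m, 0 ≤ Q m := by
    intro m
    simp only [hQ]
    exact Finset.sum_nonneg fun v _ => hw0 v
  have hQd : ∀ m, Q (m + 1) ≤ Q m := by
    intro m
    simp only [hQ]
    exact fiberSum_succ_le w hw0 hmono m
  have hpart : ∀ k, k ≤ n → 0 ≤ ∑ m ∈ Finset.range k, cc m := by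
    intro k _
    have hsum : ∑ m ∈ Finset.range k, cc m =
        (k : ℝ) / (x + 1) + ((x + 1) * ((D ∩ firstOf Rbar k).card : ℝ)
          - ((S ∩ firstOf Rbar k).card : ℝ)) := by
      simp only [hcc, hND, hNS]
      rw [Finset.sum_add_distrib, Finset.sum_sub_distrib, ← Finset.mul_sum,
        Finset.sum_const, Finset.card_range, card_inter_firstOf hDR k,
        card_inter_firstOf hS k, nsmul_eq_mul]
      ring
    rw [hsum]
    exact hperk k
  have habel := abel_nonneg n Q cc hQ0 hQd hpart
  have hexp : ∑ m ∈ Finset.range n, cc m * Q m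
      = (1 / (x + 1)) * (∑ m ∈ Finset.range n, Q m)
        + ((x + 1) * (∑ m ∈ Finset.range n, ND m * Q m)
          - ∑ m ∈ Finset.range n, NS m * Q m) := by
    rw [Finset.mul_sum, Finset.mul_sum, ← Finset.sum_sub_distrib, ← Finset.sum_add_distrib]
    refine Finset.sum_congr rfl fun m _ => ?_
    simp only [hcc]
    ring
  have hQsum : ∑ m ∈ Finset.range n, Q m = ∑ v ∈ Rbar, w v := by
    simp only [hQ, hn]
    exact Finset.sum_fiberwise_of_maps_to (fun v hv => Finset.mem_range.mpr (rnk_lt_card hv)) w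
  have hSsum : ∑ m ∈ Finset.range n, NS m * Q m = ∑ v ∈ S, w v := by
    simp only [hQ, hNS, hn]
    exact (sum_eq_fiber_sum hS w).symm
  have hDsum : ∑ m ∈ Finset.range n, ND m * Q m = ∑ v ∈ D, w v := by
    simp only [hQ, hND, hn]
    exact (sum_eq_fiber_sum hDR w).symm
  rw [hexp, hQsum, hSsum, hDsum] at habel
  -- Final arithmetic.
  have hfin : (x + 1) * (∑ v ∈ D, w v) ≤ (∑ v, w v) / (x * (x + 1)) := by
    have h1 : (x + 1) * (∑ v ∈ D, w v) ≤ (x + 1) * ((∑ v, w v) / (x * (x + 1) ^ 2)) :=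
      mul_le_mul_of_nonneg_left (le_of_lt hwD) (by linarith)
    have h2 : (x + 1) * ((∑ v, w v) / (x * (x + 1) ^ 2)) = (∑ v, w v) / (x * (x + 1)) := by
      field_simp
    linarith
  have hone : (1 / (x + 1)) * (∑ v ∈ Rbar, w v) = (∑ v ∈ Rbar, w v) / (x + 1) := by ring
  linarith
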